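/- For every base b ≥ 2 and every integer n ≥ 1, the running digit sum satisfies S_b(n) ≤ ((b−1)/2)·n·log_b(n), i.e. S_b(n)·log b ≤ ((b−1)/2)·n·log n. -/

import Mathlib

open Finset

private def S (b n : ℕ) : ℕ := ∑ j ∈ Finset.range n, (Nat.digits b j).sum

private lemma sum_digits_step (b n : ℕ) (hb : 2 ≤ b) :
    (Nat.digits b n).sum = n % b + (Nat.digits b (n / b)).sum := by
  rcases Nat.eq_zero_or_pos n with h | h
  · subst h; simp
  · rw [Nat.digits_def' (by omega : 1 < b) h]; simp

private lemma digitsum_split (b : ℕ) (hb : 2 ≤ b) :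
    ∀ m q i, q < b → i < b ^ m →
      (Nat.digits b (q * b ^ m + i)).sum = q + (Nat.digits b i).sum := by
  intro m
  induction m with
  | zero =>
    intro q i hq hi
    have hi0 : i = 0 := by simpa using hi
    subst hi0
    simp only [pow_zero, mul_one, add_zero]
    rcases Nat.eq_zero_or_pos q with h | h
    · subst h; simp
    · rw [Nat.digits_def' (by omega : 1 < b) h]
      simp [Nat.mod_eq_of_lt hq, Nat.div_eq_of_lt hq]
  | succ m ih =>
    intro q i hq hi
    have hb0 : 0 < b := by omega
    have h1 : (q * b ^ (m+1) + i) % b = i % b := by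
      have : q * b ^ (m+1) + i = i + (q * b ^ m) * b := by ring
      rw [this, Nat.add_mul_mod_self_right]
    have h2 : (q * b ^ (m+1) + i) / b = q * b ^ m + i / b := by
      have : q * b ^ (m+1) + i = i + (q * b ^ m) * b := by ring
      rw [this, Nat.add_mul_div_right _ _ hb0, Nat.add_comm]
    have hi' : i / b < b ^ m := Nat.div_lt_of_lt_mul (by rw [← pow_succ'] ; exact hi)
    rw [sum_digits_step b _ hb, h1, h2, ih q (i / b) hq hi',
      sum_digits_step b i hb]
    omega

private lemma sum_range_split (f : ℕ → ℕ) (a d : ℕ) :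
    ∑ j ∈ range (a + d), f j = (∑ j ∈ range a, f j) + ∑ i ∈ range d, f (a + i) := by
  rw [← Finset.sum_range_add_sum_Ico f (Nat.le_add_right a d),
    Finset.sum_Ico_eq_sum_range]
  simp

private lemma S_split (b m c r : ℕ) (hb : 2 ≤ b) (hc : c < b) (hr : r ≤ b ^ m) :
    S b (c * b ^ m + r) = S b (c * b ^ m) + c * r + S b r := by
  unfold S
  rw [sum_range_split]
  have : ∑ i ∈ range r, (Nat.digits b (c * b ^ m + i)).sum
      = ∑ i ∈ range r, (c + (Nat.digits b i).sum) := by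
    apply Finset.sum_congr rfl
    intro i hi
    exact digitsum_split b hb m c i hc (lt_of_lt_of_le (Finset.mem_range.mp hi) hr)
  rw [this, Finset.sum_add_distrib]
  simp [mul_comm]
  ring

private lemma S_cpow (b m : ℕ) (hb : 2 ≤ b) :
    ∀ c, c ≤ b → 2 * S b (c * b ^ m) = 2 * c * S b (b ^ m) + c * (c - 1) * b ^ m := by
  intro c
  induction c with
  | zero => intro _; simp [S]
  | succ c ih =>
    intro hc
    have h1 : (c+1) * b ^ m = c * b ^ m + b ^ m := by ring
    rw [h1, S_split b m c (b ^ m) hb (by omega) le_rfl]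
    have h2 := ih (by omega)
    cases c with
    | zero => simp [S]
    | succ k =>
      simp only [Nat.add_sub_cancel] at h2 ⊢
      linear_combination h2

private lemma S_pow (b : ℕ) (hb : 2 ≤ b) :
    ∀ m, 2 * S b (b ^ m) = m * b ^ m * (b - 1) := by
  intro m
  induction m with
  | zero => simp [S]
  | succ m ih =>
    have h := S_cpow b m hb b le_rfl
    rw [show b * b ^ m = b ^ (m+1) by ring] at h
    rw [h, show 2 * b * S b (b ^ m) = b * (2 * S b (b ^ m)) by ring, ih]
    cases b with
    | zero => omega
    | succ k => simp only [Nat.add_sub_cancel]; ring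

open Real

-- (d-1) log b ≤ (b-1) log d for 1 ≤ d ≤ b
private lemma L2 (b d : ℝ) (hd : 1 ≤ d) (hdb : d ≤ b) :
    (d - 1) * Real.log b ≤ (b - 1) * Real.log d := by
  rcases eq_or_lt_of_le (hd.trans hdb) with h | hb1
  · have hbd : b = 1 := h.symm
    have hd1 : d = 1 := le_antisymm (hbd ▸ hdb) hd
    simp [hbd, hd1]
  · have hb0 : (0:ℝ) < b - 1 := by linarith
    have hne : b - 1 ≠ 0 := ne_of_gt hb0
    set a : ℝ := (b - d) / (b - 1) with ha
    set s : ℝ := (d - 1) / (b - 1) with hs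
    have ha0 : 0 ≤ a := div_nonneg (by linarith) (by linarith)
    have hs0 : 0 ≤ s := div_nonneg (by linarith) (by linarith)
    have habs : a + s = 1 := by rw [ha, hs, ← add_div]
                                rw [show b - d + (d - 1) = b - 1 by ring]
                                exact div_self hne
    have key := strictConcaveOn_log_Ioi.concaveOn.2 (Set.mem_Ioi.mpr one_pos)
      (Set.mem_Ioi.mpr (by linarith : (0:ℝ) < b)) ha0 hs0 habs
    simp only [smul_eq_mul, Real.log_one, mul_zero, mul_one] at key
    have hcomb : a + s * b = d := by rw [ha, hs]; field_simp; ring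
    rw [hcomb] at key
    have hsb : s * Real.log b ≤ Real.log d := by linarith
    have hds : (b - 1) * s = d - 1 := by rw [hs]; field_simp
    rw [← hds, mul_assoc]
    exact mul_le_mul_of_nonneg_left hsb (by linarith)

private lemma L1 (c t : ℝ) (hc : 1 ≤ c) (ht0 : 0 < t) (ht1 : t < 1) :
    (1 - t) * (c * Real.log c) + t * ((c + 1) * Real.log (c + 1)) ≤
      (c + t) * Real.log (c + t) - t * Real.log t := by
  have hs : (0:ℝ) < c + t := by linarith
  have hs1 : (1:ℝ) ≤ c + t := by linarith
  -- h1' : (c+t) * (log c - log (c+t)) ≤ -t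
  have h1' : (c + t) * (Real.log c - Real.log (c + t)) ≤ -t := by
    have h := Real.log_le_sub_one_of_pos (show (0:ℝ) < c / (c + t) by positivity)
    rw [Real.log_div (by linarith) (by linarith)] at h
    have := mul_le_mul_of_nonneg_left h hs.le
    calc (c + t) * (Real.log c - Real.log (c + t)) ≤ (c + t) * (c / (c + t) - 1) := this
      _ = -t := by rw [mul_sub, mul_div_cancel₀ _ (ne_of_gt hs)]; ring
  have h2' : (c + t) * (Real.log (c + 1) - Real.log (c + t)) ≤ 1 - t := by
    have h := Real.log_le_sub_one_of_pos (show (0:ℝ) < (c + 1) / (c + t) by positivity)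
    rw [Real.log_div (by linarith) (by linarith)] at h
    have := mul_le_mul_of_nonneg_left h hs.le
    calc (c + t) * (Real.log (c + 1) - Real.log (c + t)) ≤ (c + t) * ((c + 1) / (c + t) - 1) := this
      _ = 1 - t := by rw [mul_sub, mul_div_cancel₀ _ (ne_of_gt hs)]; ring
  have hlt : 1 - t ≤ -Real.log t := by
    have := Real.log_le_sub_one_of_pos ht0
    linarith
  set D : ℝ := (1 - t) * (c * Real.log c) + t * ((c + 1) * Real.log (c + 1))
      - (c + t) * Real.log (c + t) with hD
  have hsD : (c + t) * D ≤ t * (1 - t) := by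
    have e1 := mul_le_mul_of_nonneg_left h1' (by nlinarith : (0:ℝ) ≤ (1 - t) * c)
    have e2 := mul_le_mul_of_nonneg_left h2' (by nlinarith : (0:ℝ) ≤ t * (c + 1))
    have hid : (c + t) * D = (1 - t) * c * ((c + t) * (Real.log c - Real.log (c + t)))
        + t * (c + 1) * ((c + t) * (Real.log (c + 1) - Real.log (c + t))) := by
      rw [hD]; ring
    nlinarith [e1, e2]
  have hfin : D ≤ -(t * Real.log t) := by
    rcases le_or_gt D 0 with h | h
    · nlinarith
    · have : D ≤ (c + t) * D := by nlinarith
      nlinarith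
  linarith [hfin, hD]

private lemma core (b c : ℕ) (hb : 2 ≤ b) (hc1 : 1 ≤ c) (hcb : c < b) (t : ℝ)
    (ht0 : 0 ≤ t) (ht1 : t < 1) :
    ((c:ℝ) * ((c:ℝ) - 1) + 2 * c * t) * Real.log b + ((b:ℝ) - 1) * (t * Real.log t) ≤
      ((b:ℝ) - 1) * (((c:ℝ) + t) * Real.log ((c:ℝ) + t)) := by
  have hC : (1:ℝ) ≤ (c:ℝ) := by exact_mod_cast hc1
  have hCb : (c:ℝ) ≤ (b:ℝ) - 1 := by
    have : (c:ℝ) + 1 ≤ (b:ℝ) := by exact_mod_cast hcb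
    linarith
  have hB1 : (1:ℝ) < (b:ℝ) := by exact_mod_cast (by omega : 1 < b)
  have l2c : ((c:ℝ) - 1) * Real.log b ≤ ((b:ℝ) - 1) * Real.log c :=
    L2 b c hC (by linarith)
  have l2c1 : ((c:ℝ)) * Real.log b ≤ ((b:ℝ) - 1) * Real.log ((c:ℝ) + 1) := by
    have := L2 b ((c:ℝ) + 1) (by linarith) (by linarith)
    linarith
  rcases eq_or_lt_of_le ht0 with h0 | h0
  · -- t = 0
    rw [← h0]
    simp only [mul_zero, zero_mul, add_zero, Real.log_zero, mul_zero, add_zero]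
    have := mul_le_mul_of_nonneg_left l2c (by linarith : (0:ℝ) ≤ (c:ℝ))
    nlinarith
  · have hl1 := L1 (c:ℝ) t hC h0 ht1
    have hb1 : (0:ℝ) ≤ (b:ℝ) - 1 := by linarith
    have step1 := mul_le_mul_of_nonneg_left hl1 hb1
    -- (b-1)*[(1-t)(c log c) + t((c+1) log(c+1))] ≥ weighted L2s
    have w1 := mul_le_mul_of_nonneg_left l2c (by nlinarith : (0:ℝ) ≤ (1 - t) * c)
    have w2 := mul_le_mul_of_nonneg_left l2c1 (by nlinarith : (0:ℝ) ≤ t)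
    nlinarith [w1, w2, step1]

private lemma main_aux (b : ℕ) (hb : 2 ≤ b) :
    ∀ n : ℕ, 2 * (S b n : ℝ) * Real.log b ≤ ((b:ℝ) - 1) * n * Real.log n := by
  intro n
  induction n using Nat.strong_induction_on with
  | _ n ih =>
  rcases Nat.eq_zero_or_pos n with hn0 | hn0
  · subst hn0; simp [S]
  -- setup
  set m := Nat.log b n with hm
  set c := n / b ^ m with hcdef
  set r := n % b ^ m with hrdef
  have hb1 : 1 < b := by omega
  have hbm0 : 0 < b ^ m := pow_pos (by omega) m
  have hpow_le : b ^ m ≤ n := Nat.pow_log_le_self b (by omega)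
  have hltpow : n < b ^ (m + 1) := Nat.lt_pow_succ_log_self hb1 n
  have hc1 : 1 ≤ c := (Nat.one_le_div_iff hbm0).mpr hpow_le
  have hcb : c < b := by
    rw [hcdef, Nat.div_lt_iff_lt_mul hbm0]
    have : b ^ (m + 1) = b * b ^ m := by ring
    omega
  have hr : r < b ^ m := Nat.mod_lt n hbm0
  have hrn : r < n := lt_of_lt_of_le hr hpow_le
  have hnr : n = c * b ^ m + r := by
    rw [hcdef, hrdef, Nat.mul_comm]
    exact (Nat.div_add_mod n (b ^ m)).symm
  -- nat identities
  have hsplitN : S b n = S b (c * b ^ m) + c * r + S b r := by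
    conv_lhs => rw [hnr]
    exact S_split b m c r hb hcb hr.le
  have hcpowN := S_cpow b m hb c (by omega)
  have hpowN := S_pow b hb m
  -- real abbreviations
  set C : ℝ := (c : ℝ) with hC
  set Bm : ℝ := ((b : ℝ)) ^ m with hBm
  set R : ℝ := (r : ℝ) with hR
  have hCpos : (1:ℝ) ≤ C := by rw [hC]; exact_mod_cast hc1
  have hBmpos : (0:ℝ) < Bm := by positivity
  have hbR : (1:ℝ) < (b:ℝ) := by exact_mod_cast hb1
  have hRpos : (0:ℝ) ≤ R := by rw [hR]; positivity
  have hRBm : R < Bm := by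
    rw [hR, hBm]; exact_mod_cast hr
  -- cast identities
  have e1 : (S b n : ℝ) = (S b (c * b ^ m) : ℝ) + C * R + (S b r : ℝ) := by
    rw [hsplitN]; push_cast; ring
  have e2 : 2 * (S b (c * b ^ m) : ℝ) = 2 * C * (S b (b ^ m) : ℝ) + C * (C - 1) * Bm := by
    have := congrArg (fun x : ℕ => (x : ℝ)) hcpowN
    push_cast [Nat.cast_sub hc1] at this
    rw [hC, hBm]
    push_cast at this ⊢
    linarith [this]
  have e3 : 2 * (S b (b ^ m) : ℝ) = (m : ℝ) * Bm * ((b:ℝ) - 1) := by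
    have := congrArg (fun x : ℕ => (x : ℝ)) hpowN
    push_cast [Nat.cast_sub (by omega : 1 ≤ b)] at this
    rw [hBm]; push_cast at this ⊢
    linarith [this]
  have hcast : 2 * (S b n : ℝ) = C * ((m:ℝ) * Bm * ((b:ℝ) - 1)) + C * (C - 1) * Bm
      + 2 * (C * R) + 2 * (S b r : ℝ) := by
    linear_combination 2 * e1 + e2 + C * e3
  have hcastl : 2 * (S b n : ℝ) * Real.log b
      = (C * ((m:ℝ) * Bm * ((b:ℝ) - 1)) + C * (C - 1) * Bm + 2 * (C * R)
        + 2 * (S b r : ℝ)) * Real.log b := by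
    rw [hcast]
  have hNe : (n : ℝ) = C * Bm + R := by
    rw [hC, hBm, hR]
    exact_mod_cast congrArg (fun x : ℕ => (x : ℝ)) hnr
  have l2c : (C - 1) * Real.log b ≤ ((b:ℝ) - 1) * Real.log C := by
    apply L2 b C hCpos
    have : (c:ℝ) + 1 ≤ (b:ℝ) := by exact_mod_cast hcb
    rw [hC]; linarith
  rcases Nat.eq_zero_or_pos r with hr0 | hr0
  · -- r = 0
    have hR0 : R = 0 := by rw [hR, hr0]; simp
    have hSr0 : (S b r : ℝ) = 0 := by rw [hr0]; simp [S]
    have hn' : (n : ℝ) = Bm * C := by rw [hNe, hR0]; ring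
    have hlogN : Real.log (n : ℝ) = (m:ℝ) * Real.log b + Real.log C := by
      rw [hn', Real.log_mul (by positivity) (by linarith), hBm, Real.log_pow]
    rw [hlogN, hn', hcastl, hR0, hSr0]
    have w := mul_le_mul_of_nonneg_left l2c (by positivity : (0:ℝ) ≤ C * Bm)
    nlinarith [w]
  · -- r > 0
    have hR0 : (0:ℝ) < R := by rw [hR]; exact_mod_cast hr0
    set t : ℝ := R / Bm with htdef
    have ht0 : 0 < t := div_pos hR0 hBmpos
    have ht1 : t < 1 := (div_lt_one hBmpos).mpr hRBm
    have hRe : R = Bm * t := by rw [htdef]; field_simp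
    have hlogR : Real.log R = (m:ℝ) * Real.log b + Real.log t := by
      rw [hRe, Real.log_mul (ne_of_gt hBmpos) (ne_of_gt ht0), hBm, Real.log_pow]
    have hn' : (n : ℝ) = Bm * (C + t) := by rw [hNe, hRe]; ring
    have hlogN : Real.log (n : ℝ) = (m:ℝ) * Real.log b + Real.log (C + t) := by
      rw [hn', Real.log_mul (ne_of_gt hBmpos) (by positivity : C + t ≠ 0), hBm, Real.log_pow]
    have ihr := ih r hrn
    rw [hlogR] at ihr
    have hcore := core b c hb hc1 hcb t ht0.le ht1
    rw [← hC] at hcore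
    have hcoreB := mul_le_mul_of_nonneg_right hcore hBmpos.le
    rw [hlogN, hn', hcastl, hRe]
    rw [← hR, hRe] at ihr
    linarith [ihr, hcoreB]

theorem running_digit_sum_le (b n : ℕ) (hb : 2 ≤ b) (hn : 1 ≤ n) :
    ((∑ j ∈ Finset.range n, (Nat.digits b j).sum : ℕ) : ℝ) * Real.log b ≤
      ((b : ℝ) - 1) / 2 * n * Real.log n := by
  have h := main_aux b hb n
  have : ((∑ j ∈ Finset.range n, (Nat.digits b j).sum : ℕ) : ℝ) = (S b n : ℝ) := rfl
  rw [this]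
  linarith
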